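/- arXiv:2503.19554 — 3 statements merged into one kernel-verified Lean document; each statement's English description precedes it below -/
import Mathlib

section
/- Unbiasedness of a single random Fourier feature for the RBF kernel. Let d ≥ 1 and σ > 0. Let ω be a random vector in ℝ^d with independent N(0, 1/σ²) coordinates, and let b be uniformly distributed on [0, 2π], independent of ω. Then for all x, x' ∈ ℝ^d, E[ 2 cos(ωᵀx + b) cos(ωᵀx' + b) ] = exp(−‖x − x'‖² / (2σ²)) = K_RBF(x, x'). -/
open MeasureTheory Matrix Real ProbabilityTheory Complex
open scoped NNReal ENNReal

/-- The uniform probability measure on `[0, 2π]`. -/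
noncomputable def unifPhase : Measure ℝ :=
  (ENNReal.ofReal (2 * π))⁻¹ • volume.restrict (Set.Icc 0 (2 * π))

instance : IsProbabilityMeasure unifPhase := by
  constructor
  rw [unifPhase, Measure.smul_apply, Measure.restrict_apply_univ, Real.volume_Icc,
    smul_eq_mul]
  rw [show (2 * π - 0 : ℝ) = 2 * π by ring, ENNReal.inv_mul_cancel]
  · exact (ENNReal.ofReal_pos.mpr (by positivity)).ne'
  · exact ENNReal.ofReal_ne_top

/-- The RBF kernel with lengthscale `σ` on `ℝ^d`. -/
noncomputable def KRBF {d : ℕ} (σ : ℝ) (x x' : Fin d → ℝ) : ℝ :=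
  Real.exp (-(∑ i, (x i - x' i) ^ 2) / (2 * σ ^ 2))

/-- Characteristic-function computation for a centered real Gaussian. -/
lemma rff_char_gaussian (v : ℝ≥0) (hv : 0 < (v : ℝ)) (t : ℝ) :
    ∫ u : ℝ, Complex.exp (↑(u * t) * Complex.I) ∂(gaussianReal 0 v)
      = ↑(Real.exp (-((v : ℝ) * t ^ 2) / 2)) := by
  have hv' : (v : ℝ≥0) ≠ 0 := by exact_mod_cast hv.ne'
  rw [gaussianReal_of_var_ne_zero 0 hv', gaussianPDF_def]
  have h1 : (fun x => ENNReal.ofReal (gaussianPDFReal 0 v x))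
      = fun x => ((gaussianPDFReal 0 v x).toNNReal : ℝ≥0∞) := rfl
  rw [h1, integral_withDensity_eq_integral_smul
    ((measurable_gaussianPDFReal 0 v).real_toNNReal)]
  set b : ℂ := ((1 / (2 * (v : ℝ)) : ℝ) : ℂ) with hb_def
  have hbre : 0 < b.re := by rw [hb_def, Complex.ofReal_re]; positivity
  have hpt : ∀ x : ℝ, ((gaussianPDFReal 0 v x).toNNReal : ℝ≥0)
        • Complex.exp (↑(x * t) * Complex.I)
      = ((√(2 * π * v) : ℝ) : ℂ)⁻¹
        * (Complex.exp (Complex.I * ↑t * ↑x) * Complex.exp (-b * (x : ℂ) ^ 2)) := by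
    intro x
    rw [NNReal.smul_def, Real.coe_toNNReal _ (gaussianPDFReal_nonneg 0 v x),
      gaussianPDFReal]
    rw [Complex.real_smul]
    push_cast
    rw [mul_assoc, ← Complex.exp_add, ← Complex.exp_add]
    congr 2
    rw [hb_def]
    have : ((v : ℝ) : ℂ) ≠ 0 := by exact_mod_cast hv.ne'
    push_cast
    field_simp
    ring
  simp_rw [hpt]
  rw [integral_const_mul, fourierIntegral_gaussian hbre (t : ℂ)]
  have hπb : (↑π / b) = ((2 * π * (v : ℝ) : ℝ) : ℂ) := by
    rw [hb_def]
    have : ((v : ℝ) : ℂ) ≠ 0 := by exact_mod_cast hv.ne'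
    push_cast
    field_simp
  have hsqrt : ((√(2 * π * v) : ℝ) : ℂ) = ((2 * π * (v : ℝ) : ℝ) : ℂ) ^ (1 / 2 : ℂ) := by
    rw [Real.sqrt_eq_rpow, Complex.ofReal_cpow (by positivity)]
    norm_num
  have hne : ((2 * π * (v : ℝ) : ℝ) : ℂ) ^ (1 / 2 : ℂ) ≠ 0 := by
    rw [ne_eq, Complex.cpow_eq_zero_iff]
    push_neg
    intro h
    exfalso
    rw [Complex.ofReal_eq_zero] at h
    have : (0:ℝ) < 2 * π * v := by positivity
    linarith [this, h ▸ this]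
  rw [hπb, hsqrt, ← mul_assoc, inv_mul_cancel₀ hne, one_mul]
  rw [Complex.ofReal_exp]
  congr 1
  rw [hb_def]
  have : ((v : ℝ) : ℂ) ≠ 0 := by exact_mod_cast hv.ne'
  push_cast
  field_simp
  ring

/-- Multi-dimensional version: expectation of `cos(ω ⬝ᵥ y)` under the product Gaussian. -/
lemma rff_cos_gaussian_pi (d : ℕ) (v : ℝ≥0) (hv : 0 < (v : ℝ)) (y : Fin d → ℝ) :
    ∫ ω : Fin d → ℝ, Real.cos (ω ⬝ᵥ y) ∂(Measure.pi fun _ : Fin d => gaussianReal 0 v)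
      = Real.exp (-((v : ℝ) * ∑ i, (y i) ^ 2) / 2) := by
  have hexp : ∫ ω : Fin d → ℝ, Complex.exp (↑(ω ⬝ᵥ y) * Complex.I)
        ∂(Measure.pi fun _ : Fin d => gaussianReal 0 v)
      = ↑(Real.exp (-((v : ℝ) * ∑ i, (y i) ^ 2) / 2)) := by
    letI : MeasureSpace ℝ := ⟨gaussianReal 0 v⟩
    haveI : SigmaFinite (volume : Measure ℝ) :=
      inferInstanceAs (SigmaFinite (gaussianReal 0 v))
    have hpi : (Measure.pi fun _ : Fin d => gaussianReal 0 v)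
        = (volume : Measure (Fin d → ℝ)) := rfl
    rw [hpi]
    have hfun : ∀ ω : Fin d → ℝ, Complex.exp (↑(ω ⬝ᵥ y) * Complex.I)
        = ∏ i, Complex.exp (↑(ω i * y i) * Complex.I) := by
      intro ω
      rw [← Complex.exp_sum]
      congr 1
      rw [dotProduct]
      push_cast
      rw [Finset.sum_mul]
    simp_rw [hfun]
    rw [← hpi, MeasureTheory.integral_fintype_prod_eq_prod
      (f := fun i (u : ℝ) => Complex.exp (↑(u * y i) * Complex.I))]
    have hone : ∀ i : Fin d, (∫ u : ℝ, Complex.exp (↑(u * y i) * Complex.I))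
        = ↑(Real.exp (-((v : ℝ) * (y i) ^ 2) / 2)) := fun i => rff_char_gaussian v hv (y i)
    rw [Finset.prod_congr rfl fun i _ => rff_char_gaussian v hv (y i), ← Complex.ofReal_prod]
    congr 1
    rw [← Real.exp_sum]
    congr 1
    rw [Finset.mul_sum]
    rw [← Finset.sum_div]
    rw [← Finset.sum_neg_distrib]
  have hdpc : Continuous (fun ω : Fin d → ℝ => ω ⬝ᵥ y) := by
    simp only [dotProduct]
    exact continuous_finset_sum _ fun i _ => (continuous_apply i).mul continuous_const
  have hcont : Continuous (fun ω : Fin d → ℝ => Complex.exp (↑(ω ⬝ᵥ y) * Complex.I)) :=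
    Complex.continuous_exp.comp ((Complex.continuous_ofReal.comp hdpc).mul continuous_const)
  have hint : Integrable (fun ω : Fin d → ℝ => Complex.exp (↑(ω ⬝ᵥ y) * Complex.I))
      (Measure.pi fun _ : Fin d => gaussianReal 0 v) := by
    refine Integrable.mono' (integrable_const 1) hcont.aestronglyMeasurable
      (ae_of_all _ fun ω => ?_)
    rw [Complex.norm_exp_ofReal_mul_I]
  have hre : ∀ ω : Fin d → ℝ, Real.cos (ω ⬝ᵥ y)
      = RCLike.re (Complex.exp (↑(ω ⬝ᵥ y) * Complex.I)) := by
    intro ω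
    rw [RCLike.re_to_complex, Complex.exp_ofReal_mul_I_re]
  simp_rw [hre]
  rw [integral_re hint, hexp, RCLike.re_to_complex, Complex.ofReal_re]

/-- Averaging the product of two shifted cosines over a uniform phase. -/
lemma rff_phase_integral (u u' : ℝ) :
    ∫ b, 2 * Real.cos (u + b) * Real.cos (u' + b) ∂unifPhase = Real.cos (u - u') := by
  have hpt : ∀ b : ℝ, 2 * Real.cos (u + b) * Real.cos (u' + b)
      = Real.cos (u - u') + Real.cos (2 * b + (u + u')) := by
    intro b
    have key : ∀ A B : ℝ, 2 * Real.cos A * Real.cos B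
        = Real.cos (A - B) + Real.cos (A + B) := by
      intro A B
      rw [Real.cos_sub, Real.cos_add]
      ring
    rw [key]
    congr 1
    · congr 1
      ring
    · congr 1
      ring
  rw [unifPhase, integral_smul_measure]
  simp_rw [hpt]
  rw [integral_Icc_eq_integral_Ioc, ← intervalIntegral.integral_of_le (by positivity)]
  have hi1 : IntervalIntegrable (fun _ : ℝ => Real.cos (u - u')) volume 0 (2 * π) :=
    continuous_const.intervalIntegrable _ _
  have hi2 : IntervalIntegrable (fun b : ℝ => Real.cos (2 * b + (u + u'))) volume 0 (2 * π) :=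
    (Real.continuous_cos.comp (by continuity)).intervalIntegrable _ _
  rw [intervalIntegral.integral_add hi1 hi2, intervalIntegral.integral_const,
    intervalIntegral.integral_comp_mul_add Real.cos two_ne_zero (u + u'),
    integral_cos]
  have hs : Real.sin (2 * (2 * π) + (u + u')) - Real.sin (2 * 0 + (u + u')) = 0 := by
    rw [show 2 * (2 * π) + (u + u') = (u + u') + 2 * π + 2 * π by ring,
      Real.sin_add_two_pi, Real.sin_add_two_pi]
    simp
  rw [hs]
  rw [ENNReal.toReal_inv, ENNReal.toReal_ofReal (by positivity)]
  have hπ : (2 * π : ℝ) ≠ 0 := by positivity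
  simp only [smul_eq_mul, sub_zero, smul_zero, add_zero]
  field_simp
  ring

/-- Unbiasedness of a single random Fourier feature for the RBF kernel:
with `ω` having independent `N(0, 1/σ²)` coordinates and `b` uniform on
`[0, 2π]` independent of `ω`,
`E[2 cos(ωᵀx + b) cos(ωᵀx' + b)] = K_RBF(x, x')`. -/
theorem stmt11 (d : ℕ) (hd : 1 ≤ d) (σ : ℝ) (hσ : 0 < σ) (x x' : Fin d → ℝ) :
    ∫ ωb : (Fin d → ℝ) × ℝ,
        2 * Real.cos (ωb.1 ⬝ᵥ x + ωb.2) * Real.cos (ωb.1 ⬝ᵥ x' + ωb.2)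
        ∂((Measure.pi fun _ : Fin d =>
              gaussianReal 0 (⟨(σ ^ 2)⁻¹, by positivity⟩ : NNReal)).prod unifPhase)
      = KRBF σ x x' := by
  set v : ℝ≥0 := ⟨(σ ^ 2)⁻¹, by positivity⟩ with hv_def
  have hv : 0 < (v : ℝ) := by
    show (0 : ℝ) < (σ ^ 2)⁻¹
    positivity
  have hdpc : ∀ y : Fin d → ℝ, Continuous (fun ω : Fin d → ℝ => ω ⬝ᵥ y) := by
    intro y
    simp only [dotProduct]
    exact continuous_finset_sum _ fun i _ => (continuous_apply i).mul continuous_const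
  have hcont : Continuous (fun ωb : (Fin d → ℝ) × ℝ =>
      2 * Real.cos (ωb.1 ⬝ᵥ x + ωb.2) * Real.cos (ωb.1 ⬝ᵥ x' + ωb.2)) := by
    exact (continuous_const.mul (Real.continuous_cos.comp
        (((hdpc x).comp continuous_fst).add continuous_snd))).mul
      (Real.continuous_cos.comp (((hdpc x').comp continuous_fst).add continuous_snd))
  have hint : Integrable (fun ωb : (Fin d → ℝ) × ℝ =>
      2 * Real.cos (ωb.1 ⬝ᵥ x + ωb.2) * Real.cos (ωb.1 ⬝ᵥ x' + ωb.2))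
      ((Measure.pi fun _ : Fin d => gaussianReal 0 v).prod unifPhase) := by
    refine Integrable.mono' (integrable_const 2) hcont.aestronglyMeasurable
      (ae_of_all _ fun ωb => ?_)
    simp only [norm_mul, Real.norm_eq_abs]
    have h1 := Real.abs_cos_le_one (ωb.1 ⬝ᵥ x + ωb.2)
    have h2 := Real.abs_cos_le_one (ωb.1 ⬝ᵥ x' + ωb.2)
    have h3 : |(2 : ℝ)| = 2 := by norm_num
    rw [h3]
    nlinarith [abs_nonneg (Real.cos (ωb.1 ⬝ᵥ x + ωb.2)),
      abs_nonneg (Real.cos (ωb.1 ⬝ᵥ x' + ωb.2)),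
      mul_nonneg (abs_nonneg (Real.cos (ωb.1 ⬝ᵥ x + ωb.2)))
        (abs_nonneg (Real.cos (ωb.1 ⬝ᵥ x' + ωb.2)))]
  rw [MeasureTheory.integral_prod _ hint]
  have hinner : ∀ ω : Fin d → ℝ,
      (∫ b, 2 * Real.cos (ω ⬝ᵥ x + b) * Real.cos (ω ⬝ᵥ x' + b) ∂unifPhase)
        = Real.cos (ω ⬝ᵥ (x - x')) := by
    intro ω
    rw [rff_phase_integral, ← dotProduct_sub]
  simp_rw [hinner]
  rw [rff_cos_gaussian_pi d v hv (x - x'), KRBF]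
  congr 1
  have hvv : (v : ℝ) = (σ ^ 2)⁻¹ := rfl
  rw [hvv]
  simp only [Pi.sub_apply]
  have hσ2 : (σ ^ 2 : ℝ) ≠ 0 := by positivity
  field_simp
end

section
/- Unbiasedness of the D-dimensional random Fourier feature map for the RBF kernel. Let d, D ≥ 1 and σ > 0. Let (ω_1, b_1), …, (ω_D, b_D) be independent random pairs, where each ω_i has independent N(0, 1/σ²) coordinates in ℝ^d and each b_i is uniform on [0, 2π], independent of ω_i. Define z(x) = √(2/D) (cos(ω_1ᵀx + b_1), …, cos(ω_Dᵀx + b_D)) ∈ ℝ^D. Then for all x, x' ∈ ℝ^d, E[ z(x)ᵀ z(x') ] = exp(−‖x − x'‖² / (2σ²)) = K_RBF(x, x'). -/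
open MeasureTheory Matrix Real ProbabilityTheory

/-- The `D`-dimensional random Fourier feature map evaluated at `x`, given
frequencies/phases `w i = (ω_i, b_i)`:
`z(x) = √(2/D) (cos(ω_iᵀx + b_i))_{i=1}^D`. -/
noncomputable def rff (d D : ℕ) (w : Fin D → (Fin d → ℝ) × ℝ)
    (x : Fin d → ℝ) : Fin D → ℝ :=
  fun i => Real.sqrt (2 / D) * Real.cos ((w i).1 ⬝ᵥ x + (w i).2)

section Helpers

open intervalIntegral in
lemma integral_cos_unifPhase (c : ℝ) : ∫ b, Real.cos (c + 2 * b) ∂unifPhase = 0 := by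
  rw [unifPhase, MeasureTheory.integral_smul_measure]
  have h1 : ∫ b in Set.Icc 0 (2 * π), Real.cos (c + 2 * b) = 0 := by
    rw [integral_Icc_eq_integral_Ioc,
      ← intervalIntegral.integral_of_le (by positivity : (0:ℝ) ≤ 2 * π)]
    have : ∀ b : ℝ, Real.cos (c + 2 * b) = Real.cos (2 * b + c) := by
      intro b; rw [add_comm]
    simp_rw [this]
    rw [intervalIntegral.integral_comp_mul_add Real.cos two_ne_zero c]
    rw [integral_cos]
    have h2 : 2 * (2 * π) + c = (c + 2 * π) + 2 * π := by ring
    have h0 : 2 * 0 + c = c := by ring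
    rw [h2, h0, Real.sin_add_two_pi, Real.sin_add_two_pi, sub_self, smul_zero]
  rw [h1, smul_zero]

lemma integral_cexp_gaussian (u : ℝ) (v : NNReal) (hv : v ≠ 0) :
    ∫ t, Complex.exp (Complex.I * u * t) ∂gaussianReal 0 v
      = Complex.exp (-(u ^ 2 * v) / 2) := by
  have hv' : (0:ℝ) < v := lt_of_le_of_ne v.2 (by exact_mod_cast (Ne.symm hv))
  rw [gaussianReal_of_var_ne_zero 0 hv]
  have hpdf : gaussianPDF 0 v = fun x => ((gaussianPDFReal 0 v x).toNNReal : ENNReal) := by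
    funext x; rw [gaussianPDF_def]; rfl
  rw [hpdf, integral_withDensity_eq_integral_smul
    ((measurable_gaussianPDFReal 0 v).real_toNNReal)]
  have hsm : ∀ x : ℝ, ((gaussianPDFReal 0 v x).toNNReal : NNReal) • Complex.exp (Complex.I * u * x)
      = ((Real.sqrt (2 * π * v))⁻¹ : ℝ) •
        (Complex.exp (Complex.I * u * x) * Complex.exp (-(((2 * (v:ℝ))⁻¹ : ℝ) : ℂ) * (x:ℂ) ^ 2)) := by
    intro x
    rw [NNReal.smul_def, Real.coe_toNNReal _ (gaussianPDFReal_nonneg 0 v x),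
      gaussianPDFReal_def]
    simp only [sub_zero]
    rw [mul_smul]
    congr 1
    rw [Complex.real_smul, mul_comm, Complex.ofReal_exp]
    congr 1
    push_cast
    have hv0 : (v:ℝ) ≠ 0 := ne_of_gt hv'
    field_simp
  simp_rw [hsm]
  rw [integral_smul, fourierIntegral_gaussian (by simpa using (by positivity : (0:ℝ) < (2*(v:ℝ))⁻¹)) (u : ℂ)]
  have h1 : (↑π / ((((2 * (v:ℝ))⁻¹ : ℝ)) : ℂ)) = ((2 * π * v : ℝ) : ℂ) := by
    push_cast; field_simp
  have h2 : -(u:ℂ) ^ 2 / (4 * ((((2 * (v:ℝ))⁻¹ : ℝ)) : ℂ)) = -(u ^ 2 * v) / 2 := by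
    have : ((2 * (v:ℝ))⁻¹ : ℝ) ≠ 0 := by positivity
    push_cast
    field_simp
    ring
  rw [h1, h2]
  have h3 : ((2 * π * v : ℝ) : ℂ) ^ (1 / 2 : ℂ) = ((Real.sqrt (2 * π * v) : ℝ) : ℂ) := by
    rw [Real.sqrt_eq_rpow, Complex.ofReal_cpow (by positivity)]
    norm_num
  have h4 : Real.sqrt (2 * π * v) ≠ 0 := by positivity
  rw [h3, Complex.real_smul, ← mul_assoc, ← Complex.ofReal_mul, inv_mul_cancel₀ h4,
    Complex.ofReal_one, one_mul]

lemma pi_map_eval {n : ℕ} {α : Type*} [MeasurableSpace α] (μ : Measure α)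
    [IsProbabilityMeasure μ] (i : Fin n) :
    (Measure.pi (fun _ : Fin n => μ)).map (fun w => w i) = μ := by
  ext s hs
  rw [Measure.map_apply (measurable_pi_apply i) hs]
  have : (fun w : Fin n → α => w i) ⁻¹' s
      = Set.pi Set.univ (Function.update (fun _ => Set.univ) i s) := by
    rw [← Set.eval_preimage]
  rw [this, Measure.pi_pi]
  rw [Finset.prod_eq_single i (fun j _ hj => by
      rw [Function.update_of_ne hj]; exact measure_univ) (by simp)]
  rw [Function.update_self]

lemma integral_eval {n : ℕ} {α : Type*} [MeasurableSpace α] (μ : Measure α)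
    [IsProbabilityMeasure μ] (i : Fin n) {E : Type*} [NormedAddCommGroup E]
    [NormedSpace ℝ E] {g : α → E} (hg : AEStronglyMeasurable g μ) :
    ∫ w : Fin n → α, g (w i) ∂Measure.pi (fun _ : Fin n => μ) = ∫ a, g a ∂μ := by
  rw [← integral_map (measurable_pi_apply i).aemeasurable
    (by rwa [pi_map_eval] : AEStronglyMeasurable g
      ((Measure.pi (fun _ : Fin n => μ)).map (fun w => w i))), pi_map_eval]

lemma integral_pi_prod {α : Type*} [MeasurableSpace α] (μ : Measure α)
    [IsProbabilityMeasure μ] : ∀ (n : ℕ) (f : Fin n → α → ℂ),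
    ∫ x : Fin n → α, ∏ i, f i (x i) ∂Measure.pi (fun _ : Fin n => μ)
      = ∏ i, ∫ t, f i t ∂μ := by
  intro n
  induction n with
  | zero =>
      intro f
      simp [Measure.pi_of_empty (fun _ : Fin 0 => μ)]
  | succ n ih =>
      intro f
      have hmp := (measurePreserving_piFinSuccAbove (fun _ : Fin (n + 1) => μ) 0).symm
      rw [← hmp.integral_comp']
      simp_rw [MeasurableEquiv.piFinSuccAbove_symm_apply, Fin.insertNthEquiv,
        Fin.prod_univ_succ, Fin.insertNth_zero, Equiv.coe_fn_mk, Fin.cons_succ,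
        Fin.cons_zero, cast_eq]
      rw [integral_prod_mul (f 0) (fun y : Fin n → α => ∏ i, f i.succ (y i))]
      rw [ih (fun i => f i.succ)]

lemma integral_cos_pi_gaussian {d : ℕ} (v : Fin d → ℝ) (vσ : NNReal) (hσ : vσ ≠ 0) :
    ∫ ω : Fin d → ℝ, Real.cos (ω ⬝ᵥ v) ∂Measure.pi (fun _ : Fin d => gaussianReal 0 vσ)
      = Real.exp (-(∑ j, (v j) ^ 2 * vσ) / 2) := by
  have hmeas : Measurable (fun ω : Fin d → ℝ => ω ⬝ᵥ v) := by
    unfold dotProduct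
    exact Finset.measurable_sum _ fun j _ => by fun_prop
  have hfm : Measurable (fun ω : Fin d → ℝ => Complex.exp (Complex.I * (ω ⬝ᵥ v : ℝ))) := by
    exact (Complex.measurable_ofReal.comp hmeas).const_mul Complex.I |>.cexp
  have hint : Integrable (fun ω : Fin d → ℝ => Complex.exp (Complex.I * (ω ⬝ᵥ v : ℝ)))
      (Measure.pi (fun _ : Fin d => gaussianReal 0 vσ)) := by
    refine ⟨hfm.aestronglyMeasurable, HasFiniteIntegral.of_bounded (C := 1) ?_⟩
    filter_upwards with ω
    rw [Complex.norm_exp]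
    simp
  have hcos : ∀ t : ℝ, Real.cos t = (Complex.exp (Complex.I * t)).re := by
    intro t; rw [mul_comm]; exact (Complex.exp_ofReal_mul_I_re t).symm
  simp_rw [hcos]
  have hre := integral_re (𝕜 := ℂ) hint
  simp only [RCLike.re_eq_complex_re] at hre
  rw [hre]
  have hsplit : (fun ω : Fin d → ℝ => Complex.exp (Complex.I * (ω ⬝ᵥ v : ℝ)))
      = fun ω : Fin d → ℝ => ∏ j, Complex.exp (Complex.I * (v j) * (ω j)) := by
    funext ω
    rw [← Complex.exp_sum]
    congr 1
    unfold dotProduct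
    push_cast
    rw [Finset.mul_sum]
    exact Finset.sum_congr rfl fun j _ => by ring
  rw [hsplit, integral_pi_prod (gaussianReal 0 vσ) d
    (fun j => fun t : ℝ => Complex.exp (Complex.I * (v j) * t))]
  have : ∀ j, ∫ t, Complex.exp (Complex.I * (v j) * t) ∂gaussianReal 0 vσ
      = Complex.exp (-((v j) ^ 2 * vσ) / 2) := fun j => integral_cexp_gaussian (v j) vσ hσ
  simp_rw [this, ← Complex.exp_sum]
  have : ∑ j, -((v j : ℂ) ^ 2 * (vσ : ℝ)) / 2 = ((-(∑ j, (v j) ^ 2 * vσ) / 2 : ℝ) : ℂ) := by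
    push_cast
    rw [← Finset.sum_div, ← Finset.sum_neg_distrib]
  rw [this, Complex.exp_ofReal_re]

lemma integrable_bdd {β : Type*} [MeasurableSpace β] (ν : Measure β) [IsFiniteMeasure ν]
    {f : β → ℝ} (hm : AEStronglyMeasurable f ν) (C : ℝ) (hb : ∀ a, |f a| ≤ C) :
    Integrable f ν :=
  ⟨hm, HasFiniteIntegral.of_bounded (C := C)
    (Filter.Eventually.of_forall (by simpa [Real.norm_eq_abs] using hb))⟩

lemma cos_mul_cos_key (A B t : ℝ) :
    Real.cos (A + t) * Real.cos (B + t)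
      = Real.cos (A - B) / 2 + Real.cos ((A + B) + 2 * t) / 2 := by
  simp only [Real.cos_add, Real.cos_sub, Real.sin_add, two_mul]
  linear_combination ((Real.cos A * Real.cos B + Real.sin A * Real.sin B) / 2)
    * (Real.sin_sq_add_cos_sq t)

lemma measurable_dot {d : ℕ} (v : Fin d → ℝ) :
    Measurable (fun p : (Fin d → ℝ) × ℝ => p.1 ⬝ᵥ v) := by
  unfold dotProduct
  exact Finset.measurable_sum _ fun j _ =>
    by fun_prop

lemma J_eq {d : ℕ} (x x' : Fin d → ℝ) (vσ : NNReal) (hσ : vσ ≠ 0) :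
    ∫ p : (Fin d → ℝ) × ℝ, Real.cos (p.1 ⬝ᵥ x + p.2) * Real.cos (p.1 ⬝ᵥ x' + p.2)
        ∂((Measure.pi fun _ : Fin d => gaussianReal 0 vσ).prod unifPhase)
      = Real.exp (-(∑ j, (x j - x' j) ^ 2 * vσ) / 2) / 2 := by
  have hcc : ∀ p : (Fin d → ℝ) × ℝ,
      Real.cos (p.1 ⬝ᵥ x + p.2) * Real.cos (p.1 ⬝ᵥ x' + p.2)
        = Real.cos (p.1 ⬝ᵥ (x - x')) / 2
          + Real.cos (p.1 ⬝ᵥ (x + x') + 2 * p.2) / 2 := by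
    intro p
    rw [dotProduct_sub, dotProduct_add]
    exact cos_mul_cos_key _ _ _
  simp_rw [hcc]
  have hF : Integrable (fun p : (Fin d → ℝ) × ℝ => Real.cos (p.1 ⬝ᵥ (x - x')) / 2)
      ((Measure.pi fun _ : Fin d => gaussianReal 0 vσ).prod unifPhase) := by
    refine integrable_bdd _ (((Real.measurable_cos.comp (measurable_dot _)).div_const
      2).aestronglyMeasurable) 1 fun a => ?_
    rw [abs_div, _root_.abs_two]
    have := Real.abs_cos_le_one (a.1 ⬝ᵥ (x - x'))
    linarith
  have hG : Integrable (fun p : (Fin d → ℝ) × ℝ =>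
      Real.cos (p.1 ⬝ᵥ (x + x') + 2 * p.2) / 2)
      ((Measure.pi fun _ : Fin d => gaussianReal 0 vσ).prod unifPhase) := by
    refine integrable_bdd _ (((Real.measurable_cos.comp ((measurable_dot _).add
      (measurable_snd.const_mul 2))).div_const 2).aestronglyMeasurable) 1 fun a => ?_
    rw [abs_div, _root_.abs_two]
    have := Real.abs_cos_le_one (a.1 ⬝ᵥ (x + x') + 2 * a.2)
    linarith
  rw [integral_add hF hG]
  have h1 : ∫ p : (Fin d → ℝ) × ℝ, Real.cos (p.1 ⬝ᵥ (x - x')) / 2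
      ∂((Measure.pi fun _ : Fin d => gaussianReal 0 vσ).prod unifPhase)
      = Real.exp (-(∑ j, (x j - x' j) ^ 2 * vσ) / 2) / 2 := by
    rw [integral_fun_fst (f := fun ω : Fin d → ℝ => Real.cos (ω ⬝ᵥ (x - x')) / 2)]
    rw [probReal_univ, one_smul, integral_div,
      integral_cos_pi_gaussian (x - x') vσ hσ]
    norm_num [Pi.sub_apply]
  have h2 : ∫ p : (Fin d → ℝ) × ℝ, Real.cos (p.1 ⬝ᵥ (x + x') + 2 * p.2) / 2
      ∂((Measure.pi fun _ : Fin d => gaussianReal 0 vσ).prod unifPhase) = 0 := by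
    rw [integral_prod _ hG]
    have : ∀ ω : Fin d → ℝ,
        ∫ b, Real.cos (ω ⬝ᵥ (x + x') + 2 * b) / 2 ∂unifPhase = 0 := by
      intro ω
      rw [integral_div, integral_cos_unifPhase, zero_div]
    simp_rw [this, integral_zero]
  rw [h1, h2, add_zero]

end Helpers


set_option maxHeartbeats 2000000 in
/-- Unbiasedness of the `D`-dimensional random Fourier feature map for the RBF
kernel: with i.i.d. pairs `(ω_i, b_i)` where `ω_i ~ N(0, σ⁻² I_d)` and
`b_i ~ Uniform[0, 2π]`, `E[z(x)ᵀ z(x')] = K_RBF(x, x')`. -/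
theorem stmt12 (d D : ℕ) (hd : 1 ≤ d) (hD : 1 ≤ D) (σ : ℝ) (hσ : 0 < σ)
    (x x' : Fin d → ℝ) :
    ∫ w : Fin D → (Fin d → ℝ) × ℝ,
        rff d D w x ⬝ᵥ rff d D w x'
        ∂(Measure.pi fun _ : Fin D =>
            (Measure.pi fun _ : Fin d =>
              gaussianReal 0 (⟨(σ ^ 2)⁻¹, by positivity⟩ : NNReal)).prod unifPhase)
      = KRBF σ x x' := by
  have hvσ : (⟨(σ ^ 2)⁻¹, by positivity⟩ : NNReal) ≠ 0 := by
    intro h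
    have h' : ((σ ^ 2)⁻¹ : ℝ) = 0 := congrArg Subtype.val h
    exact absurd h' (by positivity)
  have hDpos : (0:ℝ) < D := by exact_mod_cast Nat.lt_of_lt_of_le Nat.zero_lt_one hD
  set vσ : NNReal := (⟨(σ ^ 2)⁻¹, by positivity⟩ : NNReal) with hvσdef
  set μc : Measure ((Fin d → ℝ) × ℝ) :=
    (Measure.pi fun _ : Fin d => gaussianReal 0 vσ).prod unifPhase with hμc
  set g : (Fin d → ℝ) × ℝ → ℝ := fun p =>
    (2 / (D:ℝ)) * (Real.cos (p.1 ⬝ᵥ x + p.2) * Real.cos (p.1 ⬝ᵥ x' + p.2)) with hg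
  have hgmeas : Measurable g :=
    ((Real.measurable_cos.comp ((measurable_dot x).add measurable_snd)).mul
      (Real.measurable_cos.comp ((measurable_dot x').add measurable_snd))).const_mul _
  have hgb : ∀ p, |g p| ≤ 2 := by
    intro p
    rw [hg]
    simp only
    rw [abs_mul, abs_mul]
    have h1 := Real.abs_cos_le_one (p.1 ⬝ᵥ x + p.2)
    have h2 := Real.abs_cos_le_one (p.1 ⬝ᵥ x' + p.2)
    have h3 : |2/(D:ℝ)| = 2/D := abs_of_nonneg (by positivity)
    have h4 : 2/(D:ℝ) ≤ 2 := by
      rw [div_le_iff₀ hDpos]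
      have : (1:ℝ) ≤ D := by exact_mod_cast hD
      nlinarith
    rw [h3]
    have h5 : |Real.cos (p.1 ⬝ᵥ x + p.2)| * |Real.cos (p.1 ⬝ᵥ x' + p.2)| ≤ 1 :=
      mul_le_one₀ h1 (abs_nonneg _) h2
    calc 2/(D:ℝ) * (|Real.cos (p.1 ⬝ᵥ x + p.2)| * |Real.cos (p.1 ⬝ᵥ x' + p.2)|)
        ≤ 2/(D:ℝ) * 1 := mul_le_mul_of_nonneg_left h5 (by positivity)
      _ ≤ 2 := by rw [mul_one]; exact h4
  have hexpand : ∀ w : Fin D → (Fin d → ℝ) × ℝ,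
      rff d D w x ⬝ᵥ rff d D w x' = ∑ i, g (w i) := by
    intro w
    rw [show rff d D w x ⬝ᵥ rff d D w x'
      = ∑ i, rff d D w x i * rff d D w x' i from rfl]
    simp only [rff, hg]
    refine Finset.sum_congr rfl fun i _ => ?_
    have h2D : Real.sqrt (2/(D:ℝ)) * Real.sqrt (2/(D:ℝ)) = 2/(D:ℝ) :=
      Real.mul_self_sqrt (by positivity)
    linear_combination (Real.cos ((w i).1 ⬝ᵥ x + (w i).2)
      * Real.cos ((w i).1 ⬝ᵥ x' + (w i).2)) * h2D
  have hInt : ∀ i : Fin D, Integrable (fun w : Fin D → (Fin d → ℝ) × ℝ => g (w i))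
      (Measure.pi fun _ : Fin D => μc) :=
    fun i => integrable_bdd _ ((hgmeas.comp (measurable_pi_apply i)).aestronglyMeasurable) 2
      (fun w => hgb (w i))
  rw [show (fun w : Fin D → (Fin d → ℝ) × ℝ => rff d D w x ⬝ᵥ rff d D w x')
    = fun w => ∑ i, g (w i) from funext hexpand]
  rw [integral_finset_sum Finset.univ (fun i _ => hInt i)]
  have heach : ∀ i : Fin D, ∫ w : Fin D → (Fin d → ℝ) × ℝ, g (w i)
      ∂(Measure.pi fun _ : Fin D => μc)
      = (2 / (D:ℝ)) * (Real.exp (-(∑ j, (x j - x' j) ^ 2 * vσ) / 2) / 2) := by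
    intro i
    rw [integral_eval μc i hgmeas.aestronglyMeasurable]
    rw [hg]
    simp only
    rw [MeasureTheory.integral_const_mul, hμc, J_eq x x' vσ hvσ]
  simp_rw [heach]
  rw [Finset.sum_const, Finset.card_univ, Fintype.card_fin, nsmul_eq_mul]
  rw [KRBF]
  have hcoe : ((vσ : NNReal) : ℝ) = (σ ^ 2)⁻¹ := rfl
  rw [show (-(∑ j, (x j - x' j) ^ 2 * (vσ:ℝ)) / 2) = -(∑ i, (x i - x' i) ^ 2) / (2 * σ ^ 2) by
    rw [← Finset.sum_mul, hcoe]
    field_simp]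
  field_simp
end

section
/- Pointwise concentration of the random Fourier feature kernel estimate. Let d, D ≥ 1, σ > 0, and fix x, x' ∈ ℝ^d. Let (ω_1, b_1), …, (ω_D, b_D) be independent random pairs, with each ω_i having independent N(0, 1/σ²) coordinates in ℝ^d and each b_i uniform on [0, 2π], independent of ω_i, and define z(x) = √(2/D)(cos(ω_iᵀx + b_i))_{i=1}^D. Then for every ε > 0, P( | z(x)ᵀ z(x') − K_RBF(x, x') | ≥ ε ) ≤ 2 exp(−D ε² / 8), where K_RBF(x, x') = exp(−‖x − x'‖²/(2σ²)). -/
open MeasureTheory Matrix Real ProbabilityTheory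

open scoped NNReal ENNReal

lemma exp_nine_quarters_lt_ten : Real.exp (9/4) < 10 := by
  have h4 : Real.exp (9/4) ^ 4 = Real.exp 9 := by
    rw [← Real.exp_nat_mul]; norm_num
  have h9 : Real.exp 9 < 10000 := by
    have h : Real.exp 9 = Real.exp 1 ^ 9 := by rw [← Real.exp_nat_mul]; norm_num
    rw [h]
    calc Real.exp 1 ^ 9 ≤ 2.7182818286 ^ 9 := by
          gcongr
          exact Real.exp_one_lt_d9.le
      _ < 10000 := by norm_num
  have := lt_of_pow_lt_pow_left₀ 4 (by norm_num : (0:ℝ) ≤ 10) (by rw [h4]; norm_num; linarith : Real.exp (9/4) ^ 4 < 10 ^ 4)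
  exact this

/-- `exp u ≤ (1-u)⁻¹` for `u < 1`. -/
lemma exp_le_inv_one_sub {u : ℝ} (h : u < 1) : Real.exp u ≤ (1 - u)⁻¹ := by
  have h2 : (0:ℝ) < 1 - u := by linarith
  rw [le_inv_comm₀ (Real.exp_pos _) h2]
  have h3 := Real.add_one_le_exp (-u)
  have h4 : Real.exp (-u) = (Real.exp u)⁻¹ := Real.exp_neg _
  nlinarith [Real.exp_pos u, Real.exp_pos (-u)]

/-- derivative positivity: `1 + 4u ≥ exp u` on `[0, 9/4]`. -/
lemma deriv_pos_aux {u : ℝ} (h0 : 0 ≤ u) (h1 : u ≤ 9/4) : Real.exp u ≤ 1 + 4 * u := by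
  rcases le_or_gt u 1 with hu | hu
  · have hk : Real.exp (u/2) ≤ (1 - u/2)⁻¹ := exp_le_inv_one_sub (by linarith)
    have hsq : Real.exp u = Real.exp (u/2) ^ 2 := by
      rw [← Real.exp_nat_mul]; push_cast; ring_nf
    have h2 : (0:ℝ) < 1 - u/2 := by linarith
    have h3 : Real.exp u ≤ ((1 - u/2)⁻¹)^2 := by
      rw [hsq]
      gcongr
    have h5 : ((1 - u/2)⁻¹)^2 ≤ 1 + 4*u := by
      rw [inv_pow, inv_le_iff_one_le_mul₀ (by positivity)]
      nlinarith [mul_nonneg h0 (sq_nonneg (u-1)), mul_nonneg h0 (sub_nonneg.mpr hu), sq_nonneg u]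
    linarith
  · -- exp u * (13/4 - u) ≤ exp (9/4) < 10 ≤ (13/4-u)(1+4u)
    have key : Real.exp u * (13/4 - u) ≤ Real.exp (9/4) := by
      have := Real.add_one_le_exp (9/4 - u)
      have hmul : Real.exp u * Real.exp (9/4 - u) = Real.exp (9/4) := by
        rw [← Real.exp_add]; ring_nf
      nlinarith [Real.exp_pos u]
    have h10 : Real.exp u * (13/4 - u) ≤ 10 := key.trans exp_nine_quarters_lt_ten.le
    have hq : 10 ≤ (13/4 - u) * (1 + 4*u) := by nlinarith
    have hp : (0:ℝ) < 13/4 - u := by linarith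
    nlinarith [Real.exp_pos u]

/-- The key elementary inequality: `exp u ≤ 1 + u + 2u²` for `u ≤ 9/4`. -/
lemma exp_le_one_add_add_sq {u : ℝ} (h : u ≤ 9/4) : Real.exp u ≤ 1 + u + 2 * u^2 := by
  rcases le_or_gt u (1/2) with hu | hu
  · have hk := exp_le_inv_one_sub (show u < 1 by linarith)
    have h2 : (0:ℝ) < 1 - u := by linarith
    have : (1-u)⁻¹ ≤ 1 + u + 2*u^2 := by
      rw [inv_le_iff_one_le_mul₀ (by positivity)]
      nlinarith
    linarith
  · -- monotone argument on [0, 9/4]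
    set f : ℝ → ℝ := fun t => 1 + t + 2 * t^2 - Real.exp t with hf
    have hder : ∀ t : ℝ, HasDerivAt f (1 + 4*t - Real.exp t) t := by
      intro t
      have : HasDerivAt (fun t : ℝ => 1 + t + 2 * t^2 - Real.exp t)
          (0 + 1 + 2 * (2*t) - Real.exp t) t := by
        exact (((hasDerivAt_const t 1).add (hasDerivAt_id t)).add
          (((hasDerivAt_pow 2 t).const_mul 2))).sub (Real.hasDerivAt_exp t) |>.congr_deriv (by ring_nf)
      simpa using this.congr_deriv (by ring)
    have hmono : MonotoneOn f (Set.Icc 0 (9/4)) := by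
      apply monotoneOn_of_deriv_nonneg (convex_Icc 0 (9/4))
      · exact (Continuous.continuousOn (by continuity))
      · intro t ht
        exact (hder t).differentiableAt.differentiableWithinAt
      · intro t ht
        rw [(hder t).deriv]
        rw [interior_Icc] at ht
        have := deriv_pos_aux ht.1.le ht.2.le
        linarith
    have h0 : f 0 = 0 := by simp [hf]
    have := hmono (Set.mem_Icc.mpr ⟨by norm_num, by norm_num⟩)
      (Set.mem_Icc.mpr ⟨by linarith, h⟩) (by linarith : (0:ℝ) ≤ u)
    rw [h0] at this
    simp only [hf] at this
    linarith


lemma unifPhase_cos_int (c : ℝ) (n : ℕ) (hn : n ≠ 0) :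
    ∫ b, Real.cos (c + n * b) ∂unifPhase = 0 := by
  rw [unifPhase, integral_smul_measure]
  have h1 : ∫ b in Set.Icc 0 (2*π), Real.cos (c + n * b) =
      ∫ b in (0:ℝ)..(2*π), Real.cos (c + n * b) := by
    rw [intervalIntegral.integral_of_le (by positivity : (0:ℝ) ≤ 2*π),
      integral_Icc_eq_integral_Ioc]
  have h2 : ∫ b in (0:ℝ)..(2*π), Real.cos (c + n * b) = 0 := by
    rw [intervalIntegral.integral_comp_add_mul Real.cos
      (by exact_mod_cast hn : (n:ℝ) ≠ 0) c]
    rw [integral_cos]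
    have : Real.sin (c + n * (2*π)) = Real.sin c := Real.sin_add_nat_mul_two_pi c n
    simp only [mul_zero, add_zero]
    rw [this]
    simp
  rw [h1, h2]
  simp


lemma gaussian_char_one (v : ℝ≥0) (hv : v ≠ 0) (r : ℝ) :
    ∫ s, Complex.exp ((r * s : ℝ) * Complex.I) ∂(gaussianReal 0 v) =
      (Real.exp (-(v:ℝ) * r^2 / 2) : ℂ) := by
  have hv' : (0:ℝ) < v := lt_of_le_of_ne v.2 (by exact_mod_cast (Ne.symm hv))
  have hbne : Real.sqrt (2 * π * v) ≠ 0 := by positivity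
  set b : ℂ := ((1/(2*(v:ℝ)) : ℝ) : ℂ) with hbdef
  have hb : 0 < b.re := by
    rw [hbdef, Complex.ofReal_re]; positivity
  have key := fourierIntegral_gaussian hb (r : ℂ)
  rw [gaussianReal_of_var_ne_zero 0 hv]
  have hmeas : Measurable fun x => (gaussianPDFReal 0 v x).toNNReal :=
    (measurable_gaussianPDFReal 0 v).real_toNNReal
  have hpdf : gaussianPDF 0 v = fun x => ((gaussianPDFReal 0 v x).toNNReal : ℝ≥0∞) := by
    funext x; rfl
  rw [hpdf, integral_withDensity_eq_integral_smul hmeas]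
  have hpoint : ∀ x : ℝ, (gaussianPDFReal 0 v x).toNNReal • Complex.exp ((r * x : ℝ) * Complex.I)
      = (Real.sqrt (2 * π * v))⁻¹ •
        (Complex.exp (Complex.I * r * x) * Complex.exp (-b * x^2)) := by
    intro x
    rw [NNReal.smul_def, Real.coe_toNNReal _ (gaussianPDFReal_nonneg 0 v x)]
    rw [gaussianPDFReal]
    rw [mul_smul]
    congr 1
    rw [Complex.real_smul, Complex.ofReal_exp, ← Complex.exp_add, ← Complex.exp_add]
    congr 1
    rw [hbdef]
    push_cast
    ring
  simp_rw [hpoint]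
  rw [integral_smul, key]
  have hπb : (↑π / b) = ((2 * π * (v:ℝ) : ℝ) : ℂ) := by
    rw [hbdef]
    have h0 : ((1/(2*(v:ℝ)) : ℝ) : ℂ) ≠ 0 := by
      norm_cast
      positivity
    push_cast at h0 ⊢
    field_simp
  rw [hπb]
  have hcpow : ((2 * π * (v:ℝ) : ℝ) : ℂ) ^ (1/2 : ℂ) = ((Real.sqrt (2 * π * v) : ℝ) : ℂ) := by
    have h12 : (1/2 : ℂ) = ((1/2 : ℝ) : ℂ) := by norm_num
    rw [h12, ← Complex.ofReal_cpow (by positivity), Real.sqrt_eq_rpow]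
  rw [hcpow]
  have hexp : Complex.exp (-(r:ℂ)^2 / (4 * b)) = ((Real.exp (-(v:ℝ) * r^2 / 2) : ℝ) : ℂ) := by
    rw [Complex.ofReal_exp]
    congr 1
    rw [hbdef]
    have h0 : ((1/(2*(v:ℝ)) : ℝ) : ℂ) ≠ 0 := by
      norm_cast
      positivity
    push_cast at h0 ⊢
    field_simp
    ring_nf
  rw [hexp, Complex.real_smul, ← mul_assoc, ← Complex.ofReal_mul,
    inv_mul_cancel₀ hbne]
  simp


lemma gauss_cos_int (v : ℝ≥0) (hv : v ≠ 0) {d : ℕ} (u : Fin d → ℝ) :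
    ∫ ω, Real.cos (ω ⬝ᵥ u) ∂(Measure.pi fun _ : Fin d => gaussianReal 0 v)
      = Real.exp (-(v:ℝ) * (∑ j, u j ^ 2) / 2) := by
  have hcont : Continuous fun ω : Fin d → ℝ => ω ⬝ᵥ u := by
    unfold dotProduct
    exact continuous_finset_sum _ fun j _ => (continuous_apply j).mul continuous_const
  have hcontC : Continuous fun ω : Fin d → ℝ =>
      Complex.exp ((ω ⬝ᵥ u : ℝ) * Complex.I) :=
    Complex.continuous_exp.comp ((Complex.continuous_ofReal.comp hcont).mul continuous_const)
  have hInt : Integrable (fun ω : Fin d → ℝ => Complex.exp ((ω ⬝ᵥ u : ℝ) * Complex.I))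
      (Measure.pi fun _ : Fin d => gaussianReal 0 v) := by
    refine Integrable.mono' (integrable_const 1) hcontC.aestronglyMeasurable ?_
    filter_upwards with ω
    rw [Complex.norm_exp_ofReal_mul_I]
  have hre : ∫ ω, Real.cos (ω ⬝ᵥ u) ∂(Measure.pi fun _ : Fin d => gaussianReal 0 v)
      = (∫ ω, Complex.exp ((ω ⬝ᵥ u : ℝ) * Complex.I)
          ∂(Measure.pi fun _ : Fin d => gaussianReal 0 v)).re := by
    rw [show (∫ ω, Complex.exp ((ω ⬝ᵥ u : ℝ) * Complex.I)
          ∂(Measure.pi fun _ : Fin d => gaussianReal 0 v)).re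
        = RCLike.re (∫ ω, Complex.exp ((ω ⬝ᵥ u : ℝ) * Complex.I)
          ∂(Measure.pi fun _ : Fin d => gaussianReal 0 v)) from rfl]
    rw [← integral_re hInt]
    congr 1
    funext ω
    rw [← Complex.exp_ofReal_mul_I_re]
    rfl
  rw [hre]
  have hprod : (fun ω : Fin d → ℝ => Complex.exp ((ω ⬝ᵥ u : ℝ) * Complex.I))
      = fun ω => ∏ j, Complex.exp ((u j * ω j : ℝ) * Complex.I) := by
    funext ω
    rw [← Complex.exp_sum]
    congr 1
    unfold dotProduct
    push_cast
    rw [Finset.sum_mul]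
    congr 1
    funext j
    ring
  rw [hprod]
  letI : MeasureSpace ℝ := ⟨gaussianReal 0 v⟩
  haveI : SigmaFinite (volume : Measure ℝ) :=
    (by infer_instance : SigmaFinite (gaussianReal 0 v))
  have hpi := MeasureTheory.integral_fintype_prod_volume_eq_prod (𝕜 := ℂ) (ι := Fin d)
    (fun j s => Complex.exp ((u j * s : ℝ) * Complex.I))
  have hvol : (volume : Measure (Fin d → ℝ)) = Measure.pi fun _ : Fin d => gaussianReal 0 v := rfl
  rw [hvol] at hpi
  rw [hpi]
  have h1 : ∀ j, ∫ s : ℝ, Complex.exp ((u j * s : ℝ) * Complex.I)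
      = (Real.exp (-(v:ℝ) * (u j)^2 / 2) : ℂ) := fun j => gaussian_char_one v hv (u j)
  simp_rw [h1]
  rw [← Complex.ofReal_prod, ← Real.exp_sum]
  have : ∑ j, -(v:ℝ) * u j ^ 2 / 2 = -(v:ℝ) * (∑ j, u j ^ 2) / 2 := by
    rw [Finset.mul_sum, Finset.sum_div]
  rw [this, Complex.ofReal_re]


/-- The centered feature summand, rewritten in sum form. -/
noncomputable def phaseFeat {d : ℕ} (x x' : Fin d → ℝ) (p : (Fin d → ℝ) × ℝ) : ℝ :=
  Real.cos (p.1 ⬝ᵥ (x - x')) + Real.cos (p.1 ⬝ᵥ (x + x') + 2 * p.2)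

lemma phaseFeat_eq {d : ℕ} (x x' : Fin d → ℝ) (p : (Fin d → ℝ) × ℝ) :
    phaseFeat x x' p = 2 * Real.cos (p.1 ⬝ᵥ x + p.2) * Real.cos (p.1 ⬝ᵥ x' + p.2) := by
  have h1 : p.1 ⬝ᵥ (x - x') = (p.1 ⬝ᵥ x + p.2) - (p.1 ⬝ᵥ x' + p.2) := by
    rw [dotProduct_sub]; ring
  have h2 : p.1 ⬝ᵥ (x + x') + 2 * p.2 = (p.1 ⬝ᵥ x + p.2) + (p.1 ⬝ᵥ x' + p.2) := by
    rw [dotProduct_add]; ring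
  have key : ∀ A B : ℝ, Real.cos (A - B) + Real.cos (A + B) = 2 * Real.cos A * Real.cos B := by
    intro A B
    rw [Real.cos_sub, Real.cos_add]; ring
  rw [phaseFeat, h1, h2, key]

lemma phaseFeat_abs_le {d : ℕ} (x x' : Fin d → ℝ) (p : (Fin d → ℝ) × ℝ) :
    |phaseFeat x x' p| ≤ 2 := by
  rw [phaseFeat]
  have h1 := Real.abs_cos_le_one (p.1 ⬝ᵥ (x - x'))
  have h2 := Real.abs_cos_le_one (p.1 ⬝ᵥ (x + x') + 2 * p.2)
  have h3 := abs_add_le (Real.cos (p.1 ⬝ᵥ (x - x'))) (Real.cos (p.1 ⬝ᵥ (x + x') + 2 * p.2))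
  linarith

lemma continuous_dot {d : ℕ} (u : Fin d → ℝ) :
    Continuous fun ω : Fin d → ℝ => ω ⬝ᵥ u := by
  unfold dotProduct
  exact continuous_finset_sum _ fun j _ => (continuous_apply j).mul continuous_const

lemma continuous_phaseFeat {d : ℕ} (x x' : Fin d → ℝ) :
    Continuous (phaseFeat x x') := by
  unfold phaseFeat
  apply Continuous.add
  · exact Real.continuous_cos.comp ((continuous_dot (x - x')).comp continuous_fst)
  · exact Real.continuous_cos.comp
      (((continuous_dot (x + x')).comp continuous_fst).add (continuous_const.mul continuous_snd))

/-- integrability of bounded continuous functions on finite measures -/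
lemma integrable_of_bdd {α : Type*} [MeasurableSpace α] {μ : Measure α} [IsFiniteMeasure μ]
    {g : α → ℝ} (hm : AEStronglyMeasurable g μ) (C : ℝ) (h : ∀ a, |g a| ≤ C) :
    Integrable g μ := by
  refine Integrable.mono' (integrable_const C) hm ?_
  filter_upwards with a
  simpa using h a

lemma integrable_cos_lin (c n : ℝ) : Integrable (fun b => Real.cos (c + n * b)) unifPhase :=
  integrable_of_bdd (Continuous.aestronglyMeasurable (by continuity)) 1
    (fun b => Real.abs_cos_le_one _)

lemma unif_helper (a c e c1 c2 : ℝ) :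
    ∫ b, (a + c * Real.cos (c1 + 2*b) + e * Real.cos (c2 + 4*b)) ∂unifPhase = a := by
  have h2 : ∫ b, Real.cos (c1 + 2*b) ∂unifPhase = 0 := by
    have := unifPhase_cos_int c1 2 (by norm_num)
    push_cast at this
    exact this
  have h4 : ∫ b, Real.cos (c2 + 4*b) ∂unifPhase = 0 := by
    have := unifPhase_cos_int c2 4 (by norm_num)
    push_cast at this
    exact this
  have hIa : Integrable (fun _ : ℝ => a) unifPhase := integrable_const a
  have hIc : Integrable (fun b => c * Real.cos (c1 + 2*b)) unifPhase :=
    (integrable_cos_lin c1 2).const_mul c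
  have hIe : Integrable (fun b => e * Real.cos (c2 + 4*b)) unifPhase :=
    (integrable_cos_lin c2 4).const_mul e
  have hI1 : Integrable (fun b => a + c * Real.cos (c1 + 2*b)) unifPhase := hIa.add hIc
  rw [integral_add hI1 hIe, integral_add hIa hIc,
    integral_const, integral_const_mul, integral_const_mul, h2, h4]
  simp

section moments
variable (v : ℝ≥0) {d : ℕ} (x x' : Fin d → ℝ)

lemma integrable_phaseFeat : Integrable (phaseFeat x x') ((Measure.pi fun _ : Fin d => gaussianReal 0 v).prod unifPhase) :=
  integrable_of_bdd (continuous_phaseFeat x x').aestronglyMeasurable 2 (phaseFeat_abs_le x x')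

lemma integrable_phaseFeat_sq : Integrable (fun p => (phaseFeat x x' p)^2) ((Measure.pi fun _ : Fin d => gaussianReal 0 v).prod unifPhase) := by
  refine integrable_of_bdd (((continuous_phaseFeat x x').pow 2).aestronglyMeasurable) 4 ?_
  intro p
  have h := phaseFeat_abs_le x x' p
  rw [abs_pow]
  nlinarith [abs_nonneg (phaseFeat x x' p)]

lemma phaseFeat_mean (hv : v ≠ 0) :
    ∫ p, phaseFeat x x' p ∂((Measure.pi fun _ : Fin d => gaussianReal 0 v).prod unifPhase) = Real.exp (-(v:ℝ) * (∑ j, (x j - x' j)^2) / 2) := by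
  rw [integral_prod _ (integrable_phaseFeat v x x')]
  have hinner : ∀ ω : Fin d → ℝ,
      ∫ b, phaseFeat x x' (ω, b) ∂unifPhase = Real.cos (ω ⬝ᵥ (x - x')) := by
    intro ω
    have : (fun b => phaseFeat x x' (ω, b))
        = fun b => (Real.cos (ω ⬝ᵥ (x - x')) + 1 * Real.cos ((ω ⬝ᵥ (x + x')) + 2*b)
            + 0 * Real.cos (0 + 4*b)) := by
      funext b
      rw [phaseFeat]
      ring_nf
    rw [this, unif_helper]
  rw [integral_congr_ae (Filter.Eventually.of_forall hinner)]
  rw [gauss_cos_int v hv (x - x')]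
  congr 2

lemma phaseFeat_sq_int (hv : v ≠ 0) :
    ∫ p, (phaseFeat x x' p)^2 ∂((Measure.pi fun _ : Fin d => gaussianReal 0 v).prod unifPhase)
      = 1 + (Real.exp (-(v:ℝ) * (∑ j, (x j - x' j)^2) / 2))^4 / 2 := by
  rw [integral_prod _ (integrable_phaseFeat_sq v x x')]
  have hinner : ∀ ω : Fin d → ℝ,
      ∫ b, (phaseFeat x x' (ω, b))^2 ∂unifPhase
        = 1 + Real.cos (ω ⬝ᵥ ((2:ℝ) • (x - x'))) / 2 := by
    intro ω
    have harg : ω ⬝ᵥ ((2:ℝ) • (x - x')) = 2 * (ω ⬝ᵥ (x - x')) := by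
      rw [dotProduct_smul]
      simp
    have : (fun b => (phaseFeat x x' (ω, b))^2)
        = fun b => ((1 + Real.cos (ω ⬝ᵥ ((2:ℝ) • (x - x'))) / 2)
            + (2 * Real.cos (ω ⬝ᵥ (x - x'))) * Real.cos ((ω ⬝ᵥ (x + x')) + 2*b)
            + (1/2) * Real.cos ((2 * (ω ⬝ᵥ (x + x'))) + 4*b)) := by
      funext b
      rw [phaseFeat, harg]
      have hsq1 := Real.cos_sq (ω ⬝ᵥ (x - x'))
      have hsq2 := Real.cos_sq ((ω ⬝ᵥ (x + x')) + 2*b)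
      have h2 : 2 * ((ω ⬝ᵥ (x + x')) + 2*b) = 2 * (ω ⬝ᵥ (x + x')) + 4*b := by ring
      rw [h2] at hsq2
      simp only [Prod.fst, Prod.snd]
      linear_combination hsq1 + hsq2
    rw [this, unif_helper]
  rw [integral_congr_ae (Filter.Eventually.of_forall hinner)]
  rw [integral_add (integrable_const 1), integral_const]
  · rw [integral_div, gauss_cos_int v hv]
    have h4 : ∑ j, ((2:ℝ) • (x - x')) j ^ 2 = 4 * ∑ j, (x j - x' j)^2 := by
      rw [Finset.mul_sum]
      congr 1
      funext j
      simp [Pi.smul_apply, Pi.sub_apply]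
      ring
    rw [h4]
    have : -(v:ℝ) * (4 * ∑ j, (x j - x' j)^2) / 2
        = (4:ℕ) * (-(v:ℝ) * (∑ j, (x j - x' j)^2) / 2) := by push_cast; ring
    rw [this, Real.exp_nat_mul, probReal_univ]
    simp
  · apply Integrable.div_const
    refine integrable_of_bdd ?_ 1 (fun ω => Real.abs_cos_le_one _)
    exact (Real.continuous_cos.comp (continuous_dot _)).aestronglyMeasurable

end moments


lemma mgf_coord_bound {α : Type*} [MeasurableSpace α] {ν : Measure α} [IsProbabilityMeasure ν]
    {g : α → ℝ} (hg : AEStronglyMeasurable g ν) (hb : ∀ a, |g a| ≤ 3)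
    (hmean : ∫ a, g a ∂ν = 0) (hsq : ∫ a, (g a)^2 ∂ν ≤ 1)
    {t : ℝ} (ht : 0 ≤ t) (ht2 : t ≤ 3/4) :
    ∫ a, Real.exp (t * g a) ∂ν ≤ Real.exp (2 * t^2) := by
  have hIg : Integrable g ν := integrable_of_bdd hg 3 hb
  have hIg2 : Integrable (fun a => (g a)^2) ν := by
    refine integrable_of_bdd ((hg.pow 2)) 9 ?_
    intro a
    rw [abs_pow]
    nlinarith [abs_nonneg (g a), hb a]
  have hIexp : Integrable (fun a => Real.exp (t * g a)) ν := by
    refine integrable_of_bdd ?_ (Real.exp (9/4)) ?_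
    · exact (Real.continuous_exp.comp_aestronglyMeasurable (hg.const_mul t))
    · intro a
      rw [abs_of_pos (Real.exp_pos _)]
      apply Real.exp_le_exp.mpr
      have h1 : t * g a ≤ t * 3 := by
        have := (abs_le.mp (hb a)).2
        nlinarith
      linarith
  have hpoint : ∀ a, Real.exp (t * g a) ≤ 1 + t * g a + 2 * t^2 * (g a)^2 := by
    intro a
    have h1 : t * g a ≤ 9/4 := by
      have := (abs_le.mp (hb a)).2
      nlinarith
    have := exp_le_one_add_add_sq h1
    nlinarith [sq_nonneg (t * g a)]
  have hIrhs : Integrable (fun a => 1 + t * g a + 2 * t^2 * (g a)^2) ν :=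
    ((integrable_const 1).add (hIg.const_mul t)).add (hIg2.const_mul (2 * t^2))
  have hstep : ∫ a, Real.exp (t * g a) ∂ν ≤ ∫ a, (1 + t * g a + 2 * t^2 * (g a)^2) ∂ν :=
    integral_mono hIexp hIrhs hpoint
  have hval : ∫ a, (1 + t * g a + 2 * t^2 * (g a)^2) ∂ν ≤ 1 + 2 * t^2 := by
    have hI1 : Integrable (fun a => 1 + t * g a) ν := (integrable_const 1).add (hIg.const_mul t)
    rw [integral_add hI1 (hIg2.const_mul (2*t^2)),
      integral_add (integrable_const 1) (hIg.const_mul t),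
      integral_const, integral_const_mul, integral_const_mul, hmean]
    simp only [measure_univ, probReal_univ, ENNReal.toReal_one, smul_eq_mul, mul_one, mul_zero, add_zero]
    nlinarith [sq_nonneg t]
  have hfin : 1 + 2 * t^2 ≤ Real.exp (2 * t^2) := by
    have := Real.add_one_le_exp (2 * t^2)
    linarith
  linarith

lemma mgf_pi_eq {α : Type*} [MeasurableSpace α] {ν : Measure α} [IsProbabilityMeasure ν]
    (D : ℕ) (g : α → ℝ) (t : ℝ) :
    ∫ w : Fin D → α, Real.exp (t * ∑ i, g (w i)) ∂(Measure.pi fun _ : Fin D => ν)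
      = (∫ a, Real.exp (t * g a) ∂ν) ^ D := by
  letI : MeasureSpace α := ⟨ν⟩
  haveI : SigmaFinite (volume : Measure α) := (by infer_instance : SigmaFinite ν)
  have key := MeasureTheory.integral_fintype_prod_volume_eq_pow (𝕜 := ℝ) (ι := Fin D)
    (fun a => Real.exp (t * g a))
  have hvol : (volume : Measure (Fin D → α)) = Measure.pi fun _ : Fin D => ν := rfl
  have hvol' : (volume : Measure α) = ν := rfl
  rw [hvol, hvol'] at key
  simp only [Fintype.card_fin] at key
  rw [← key]
  congr 1
  funext w
  rw [← Real.exp_sum, Finset.mul_sum]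

lemma tail_bound {α : Type*} [MeasurableSpace α] {ν : Measure α} [IsProbabilityMeasure ν]
    (D : ℕ) (hD : 1 ≤ D) {g : α → ℝ} (hgc : Measurable g) (hb : ∀ a, |g a| ≤ 3)
    (hmean : ∫ a, g a ∂ν = 0) (hsq : ∫ a, (g a)^2 ∂ν ≤ 1) {ε : ℝ} (hε : 0 < ε) (hε3 : ε ≤ 3) :
    (Measure.pi fun _ : Fin D => ν) {w | (D:ℝ) * ε ≤ ∑ i, g (w i)}
      ≤ ENNReal.ofReal (Real.exp (-(D:ℝ) * ε^2 / 8)) := by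
  set t : ℝ := ε/4 with htdef
  have ht0 : 0 ≤ t := by positivity
  have ht34 : t ≤ 3/4 := by rw [htdef]; linarith
  set X : (Fin D → α) → ℝ := fun w => ∑ i, g (w i) with hXdef
  have hXm : Measurable X := by
    apply Finset.measurable_sum
    intro i _
    exact hgc.comp (measurable_pi_apply i)
  have hXb : ∀ w, X w ≤ 3 * D := by
    intro w
    rw [hXdef]
    calc ∑ i, g (w i) ≤ ∑ _i : Fin D, 3 :=
          Finset.sum_le_sum fun i _ => (abs_le.mp (hb (w i))).2
      _ = 3 * D := by simp [mul_comm]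
  have hint : Integrable (fun w => Real.exp (t * X w)) (Measure.pi fun _ : Fin D => ν) := by
    refine integrable_of_bdd ?_ (Real.exp (t * (3 * D))) ?_
    · exact Real.continuous_exp.comp_aestronglyMeasurable
        ((hXm.aestronglyMeasurable).const_mul t)
    · intro w
      rw [abs_of_pos (Real.exp_pos _)]
      exact Real.exp_le_exp.mpr (by nlinarith [hXb w])
  have hch := ProbabilityTheory.measure_ge_le_exp_mul_mgf (μ := Measure.pi fun _ : Fin D => ν)
    (X := X) ((D:ℝ) * ε) ht0 hint
  have hmgf : mgf X (Measure.pi fun _ : Fin D => ν) t ≤ Real.exp (2 * t^2) ^ D := by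
    rw [mgf]
    rw [show ∫ w, Real.exp (t * X w) ∂(Measure.pi fun _ : Fin D => ν)
        = (∫ a, Real.exp (t * g a) ∂ν) ^ D from mgf_pi_eq D g t]
    have h1 : ∫ a, Real.exp (t * g a) ∂ν ≤ Real.exp (2 * t^2) :=
      mgf_coord_bound hgc.aestronglyMeasurable hb hmean hsq ht0 ht34
    exact pow_le_pow_left₀ (integral_nonneg fun a => (Real.exp_pos _).le) h1 D
  have hfinal : Real.exp (-t * ((D:ℝ)*ε)) * Real.exp (2*t^2) ^ D
      = Real.exp (-(D:ℝ) * ε^2 / 8) := by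
    rw [← Real.exp_nat_mul, ← Real.exp_add, htdef]
    congr 1
    ring
  have hbound : ((Measure.pi fun _ : Fin D => ν) {w | (D:ℝ) * ε ≤ X w}).toReal
      ≤ Real.exp (-(D:ℝ) * ε^2 / 8) := by
    calc _ ≤ Real.exp (-t * ((D:ℝ)*ε)) * mgf X (Measure.pi fun _ : Fin D => ν) t := hch
      _ ≤ Real.exp (-t * ((D:ℝ)*ε)) * Real.exp (2*t^2) ^ D := by
          exact mul_le_mul_of_nonneg_left hmgf (Real.exp_pos _).le
      _ = _ := hfinal
  have := ENNReal.ofReal_le_ofReal hbound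
  rwa [ENNReal.ofReal_toReal (measure_ne_top _ _)] at this


/-- Pointwise concentration -/
theorem stmt13 (d D : ℕ) (hd : 1 ≤ d) (hD : 1 ≤ D) (σ : ℝ) (hσ : 0 < σ)
    (x x' : Fin d → ℝ) (ε : ℝ) (hε : 0 < ε) :
    (Measure.pi fun _ : Fin D =>
        (Measure.pi fun _ : Fin d =>
          gaussianReal 0 (⟨(σ ^ 2)⁻¹, by positivity⟩ : NNReal)).prod unifPhase)
      {w : Fin D → (Fin d → ℝ) × ℝ |
        ε ≤ |rff d D w x ⬝ᵥ rff d D w x' - KRBF σ x x'|}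
      ≤ ENNReal.ofReal (2 * Real.exp (-(D : ℝ) * ε ^ 2 / 8)) := by
  set v : ℝ≥0 := (⟨(σ ^ 2)⁻¹, by positivity⟩ : NNReal) with hvdef
  have hvcoe : (v:ℝ) = (σ^2)⁻¹ := rfl
  have hv : v ≠ 0 := by
    intro h
    rw [h] at hvcoe
    have : (0:ℝ) < (σ^2)⁻¹ := by positivity
    simp at hvcoe
    nlinarith [pow_pos hσ 2]
  set ν : Measure ((Fin d → ℝ) × ℝ) :=
    (Measure.pi fun _ : Fin d => gaussianReal 0 v).prod unifPhase with hνdef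
  haveI : IsProbabilityMeasure ν := by rw [hνdef]; infer_instance
  set K : ℝ := KRBF σ x x' with hKdef
  have hKform : K = Real.exp (-(v:ℝ) * (∑ j, (x j - x' j)^2) / 2) := by
    rw [hKdef, KRBF]
    congr 1
    rw [hvcoe]
    field_simp
  have hsum_nonneg : 0 ≤ ∑ j, (x j - x' j)^2 := Finset.sum_nonneg fun j _ => sq_nonneg _
  have hK0 : 0 < K := by rw [hKform]; exact Real.exp_pos _
  have hK1 : K ≤ 1 := by
    rw [hKform]
    rw [show (1:ℝ) = Real.exp 0 from (Real.exp_zero).symm]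
    apply Real.exp_le_exp.mpr
    have hv0 : (0:ℝ) ≤ v := v.2
    have : 0 ≤ (v:ℝ) * (∑ j, (x j - x' j)^2) := mul_nonneg hv0 hsum_nonneg
    linarith
  -- mean and second moment of g = phaseFeat - K
  set g : ((Fin d → ℝ) × ℝ) → ℝ := fun p => phaseFeat x x' p - K with hgdef
  have hIF : Integrable (phaseFeat x x') ν :=
    integrable_of_bdd (continuous_phaseFeat x x').aestronglyMeasurable 2 (phaseFeat_abs_le x x')
  have hIF2 : Integrable (fun p => (phaseFeat x x' p)^2) ν := by
    refine integrable_of_bdd ((continuous_phaseFeat x x').pow 2).aestronglyMeasurable 4 ?_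
    intro p
    rw [abs_pow]
    nlinarith [abs_nonneg (phaseFeat x x' p), phaseFeat_abs_le x x' p]
  have hmeanF : ∫ p, phaseFeat x x' p ∂ν = K := by
    rw [hνdef, phaseFeat_mean v x x' hv, hKform]
  have hgm : Measurable g := by
    apply Measurable.sub
    · exact (continuous_phaseFeat x x').measurable
    · exact measurable_const
  have hgb : ∀ p, |g p| ≤ 3 := by
    intro p
    have hgp : g p = phaseFeat x x' p - K := rfl
    rw [hgp]
    have h1 := phaseFeat_abs_le x x' p
    rw [abs_le] at h1 ⊢
    constructor <;> [linarith [h1.1]; linarith [h1.2]]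
  have hgmean : ∫ p, g p ∂ν = 0 := by
    rw [hgdef]
    rw [integral_sub hIF (integrable_const K), hmeanF, integral_const]
    simp
  have hgsq : ∫ p, (g p)^2 ∂ν ≤ 1 := by
    have hexpand : ∀ p, (g p)^2 = (phaseFeat x x' p)^2 - (2*K) * phaseFeat x x' p + K^2 := by
      intro p
      have hgp : g p = phaseFeat x x' p - K := rfl
      rw [hgp]; ring
    rw [integral_congr_ae (Filter.Eventually.of_forall hexpand)]
    have hI1 : Integrable (fun p => (phaseFeat x x' p)^2 - (2*K) * phaseFeat x x' p) ν :=
      hIF2.sub (hIF.const_mul (2*K))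
    rw [integral_add hI1 (integrable_const (K^2)),
      integral_sub hIF2 (hIF.const_mul (2*K)), integral_const_mul, hmeanF,
      integral_const]
    rw [hνdef, phaseFeat_sq_int v x x' hv, ← hKform]
    simp only [measure_univ, probReal_univ, ENNReal.toReal_one, smul_eq_mul, one_mul]
    have hK2 : K^2 ≤ 1 := by nlinarith
    nlinarith [mul_nonneg (sq_nonneg K) (sub_nonneg.mpr hK2)]
  -- rewrite the dot product
  have hdot : ∀ w : Fin D → (Fin d → ℝ) × ℝ,
      rff d D w x ⬝ᵥ rff d D w x' = (∑ i, phaseFeat x x' (w i)) / D := by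
    intro w
    unfold dotProduct rff
    rw [Finset.sum_div]
    congr 1
    funext i
    rw [phaseFeat_eq]
    have hs : Real.sqrt (2/D) * Real.sqrt (2/D) = 2/D :=
      Real.mul_self_sqrt (by positivity)
    linear_combination (Real.cos ((w i).1 ⬝ᵥ x + (w i).2) *
      Real.cos ((w i).1 ⬝ᵥ x' + (w i).2)) * hs
  rcases le_or_gt ε 3 with hε3 | hε3
  · -- main case
    have hsub : {w : Fin D → (Fin d → ℝ) × ℝ | ε ≤ |rff d D w x ⬝ᵥ rff d D w x' - K|}
        ⊆ {w | (D:ℝ) * ε ≤ ∑ i, g (w i)} ∪ {w | (D:ℝ) * ε ≤ ∑ i, (fun p => -(g p)) (w i)} := by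
      intro w hw
      simp only [Set.mem_setOf_eq] at hw
      have hD0 : (0:ℝ) < D := by exact_mod_cast hD
      rw [hdot w] at hw
      have hsumg : ∑ i, g (w i) = (∑ i, phaseFeat x x' (w i)) - D * K := by
        have : ∀ i, g (w i) = phaseFeat x x' (w i) - K := fun i => rfl
        simp_rw [this]
        rw [Finset.sum_sub_distrib]
        simp [mul_comm]
      have habs : (D:ℝ) * ε ≤ |∑ i, g (w i)| := by
        rw [hsumg]
        have : |(∑ i, phaseFeat x x' (w i)) / D - K| = |(∑ i, phaseFeat x x' (w i)) - D*K| / D := by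
          rw [← abs_of_pos hD0, ← abs_div]
          congr 1
          field_simp
          rw [abs_of_pos hD0]; ring
        rw [this] at hw
        have := (le_div_iff₀' hD0).mp hw
        linarith
      rcases abs_cases (∑ i, g (w i)) with ⟨heq, _⟩ | ⟨heq, _⟩
      · left; simp only [Set.mem_setOf_eq]; rw [← heq]; exact habs
      · right; simp only [Set.mem_setOf_eq]
        have hneg : ∑ i, (fun p => -(g p)) (w i) = -∑ i, g (w i) := by simp
        rw [hneg, ← heq]
        exact habs
    calc (Measure.pi fun _ : Fin D => ν) {w | ε ≤ |rff d D w x ⬝ᵥ rff d D w x' - K|}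
        ≤ (Measure.pi fun _ : Fin D => ν)
            ({w | (D:ℝ) * ε ≤ ∑ i, g (w i)} ∪ {w | (D:ℝ) * ε ≤ ∑ i, (fun p => -(g p)) (w i)}) :=
          measure_mono hsub
      _ ≤ (Measure.pi fun _ : Fin D => ν) {w | (D:ℝ) * ε ≤ ∑ i, g (w i)}
          + (Measure.pi fun _ : Fin D => ν) {w | (D:ℝ) * ε ≤ ∑ i, (fun p => -(g p)) (w i)} :=
          measure_union_le _ _
      _ ≤ ENNReal.ofReal (Real.exp (-(D:ℝ) * ε^2 / 8))
          + ENNReal.ofReal (Real.exp (-(D:ℝ) * ε^2 / 8)) := by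
          gcongr
          · exact tail_bound D hD hgm hgb hgmean hgsq hε hε3
          · refine tail_bound D hD (g := fun p => -(g p)) (hgm.neg) ?_ ?_ ?_ hε hε3
            · intro p; rw [abs_neg]; exact hgb p
            · rw [integral_neg, hgmean, neg_zero]
            · simp only [neg_sq]
              exact hgsq
      _ = ENNReal.ofReal (2 * Real.exp (-(D:ℝ) * ε^2 / 8)) := by
          rw [← ENNReal.ofReal_add (Real.exp_pos _).le (Real.exp_pos _).le]
          congr 1
          ring
  · -- ε > 3 : the event is empty
    have hempty : {w : Fin D → (Fin d → ℝ) × ℝ | ε ≤ |rff d D w x ⬝ᵥ rff d D w x' - K|} = ∅ := by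
      ext w
      simp only [Set.mem_setOf_eq, Set.mem_empty_iff_false, iff_false, not_le]
      have hD0 : (0:ℝ) < D := by exact_mod_cast hD
      have hsum : |∑ i, phaseFeat x x' (w i)| ≤ 2 * D := by
        calc |∑ i, phaseFeat x x' (w i)| ≤ ∑ i, |phaseFeat x x' (w i)| :=
              Finset.abs_sum_le_sum_abs _ _
          _ ≤ ∑ _i : Fin D, 2 := Finset.sum_le_sum fun i _ => phaseFeat_abs_le x x' (w i)
          _ = 2 * D := by simp [mul_comm]
      rw [hdot w]
      have h1 : |(∑ i, phaseFeat x x' (w i)) / D| ≤ 2 := by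
        rw [abs_div, abs_of_pos hD0, div_le_iff₀ hD0]
        linarith
      calc |(∑ i, phaseFeat x x' (w i)) / D - K|
          ≤ |(∑ i, phaseFeat x x' (w i)) / D| + |K| := abs_sub _ _
        _ ≤ 2 + 1 := by
            rw [abs_of_pos hK0]
            linarith
        _ < ε := by linarith
    rw [hempty]
    simp
end
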